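/- arXiv:1109.2652 — 6 statements merged into one kernel-verified Lean document; each statement's English description precedes it below -/
import Mathlib

section
/- Let z_1, …, z_n : ℝ → ℂ be twice-differentiable curves with |z_k(t)| < R and z_k(t) ≠ z_j(t) for k ≠ j at every time t, forming a solution of the curved n-body problem in the Poincaré disk. If the curves t ↦ e^{it} z_k(t) (k = 1,…,n) also form a solution of the same system, then for every k and every t one has 2i·ż_k(t) = z_k(t); in particular each modulus |z_k(t)| is constant in t. -/
open Complex ComplexConjugate Finset

/-- The quantity `Θ_{2,(k,j)}` appearing in the denominators of the equations of
motion of the curved `n`-body problem in the Poincaré disk of radius `R`. -/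
noncomputable def diskTheta (R : ℝ) (z w : ℂ) : ℝ :=
  ((2 * (z * conj w + w * conj z) * (R : ℂ) ^ 2
      - ((((‖z‖) ^ 2 + R ^ 2) * ((‖w‖) ^ 2 + R ^ 2) : ℝ) : ℂ)) ^ 2
    - (((R ^ 2 - (‖z‖) ^ 2) ^ 2 * (R ^ 2 - (‖w‖) ^ 2) ^ 2 : ℝ) : ℂ)).re

/-- The curves `z k` form a solution of the curved `n`-body problem in the
Poincaré disk of radius `R` with masses `m`. -/
def IsDiskSolution (R : ℝ) {n : ℕ} (m : Fin n → ℝ) (z : Fin n → ℝ → ℂ) : Prop :=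
  ∀ (k : Fin n) (t : ℝ),
    deriv (deriv (z k)) t
      = -2 * conj (z k t) * (deriv (z k) t) ^ 2
          / ((R : ℂ) ^ 2 - (((‖z k t‖) ^ 2 : ℝ) : ℂ))
        + (((R ^ 2 - (‖z k t‖) ^ 2) ^ 2 / R ^ 4 : ℝ) : ℂ) *
          ∑ j ∈ Finset.univ.erase k,
            (m j : ℂ) * (R : ℂ) * ((R : ℂ) ^ 2 - (((‖z k t‖) ^ 2 : ℝ) : ℂ))
              * ((((R ^ 2 - (‖z j t‖) ^ 2) ^ 2 : ℝ)) : ℂ)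
              * (z j t - z k t) * ((R : ℂ) ^ 2 - z k t * conj (z j t))
              / (((diskTheta R (z k t) (z j t)) ^ ((3 : ℝ) / 2) : ℝ) : ℂ)

lemma diskTheta_rot (R : ℝ) (e z w : ℂ) (he : ‖e‖ = 1) :
    diskTheta R (e * z) (e * w) = diskTheta R z w := by
  have h1 : ‖e * z‖ = ‖z‖ := by simp [map_mul, he]
  have h2 : ‖e * w‖ = ‖w‖ := by simp [map_mul, he]
  have h3 : e * conj e = 1 := by
    rw [Complex.mul_conj]; norm_cast; simp [Complex.normSq_eq_norm_sq, he]
  have h4 : (e * z) * conj (e * w) = z * conj w := by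
    rw [map_mul]; linear_combination (z * conj w) * h3
  have h5 : (e * w) * conj (e * z) = w * conj z := by
    rw [map_mul]; linear_combination (w * conj z) * h3
  unfold diskTheta
  rw [h1, h2, h4, h5]

lemma cexp_mul_hasDerivAt (c : ℂ) (s : ℝ) :
    HasDerivAt (fun y : ℝ => Complex.exp (c * y)) (c * Complex.exp (c * s)) s := by
  have h := (((hasDerivAt_id s).ofReal_comp).const_mul c).cexp
  simpa [mul_comm] using h

/-- If a solution of the curved `n`-body problem in the Poincaré disk remains a
solution after the action `z ↦ e^{it} z`, then `2i ż_k = z_k` for all `k` and `t`;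
in particular each `|z_k(t)|` is constant in `t`. -/
theorem elliptic_action_invariance (R : ℝ) (hR : 0 < R) (n : ℕ) (hn : 2 ≤ n)
    (m : Fin n → ℝ) (hm : ∀ k, 0 < m k)
    (z : Fin n → ℝ → ℂ)
    (hz1 : ∀ k, Differentiable ℝ (z k))
    (hz2 : ∀ k, Differentiable ℝ (deriv (z k)))
    (hdisk : ∀ k t, ‖z k t‖ < R)
    (hsep : ∀ k j, k ≠ j → ∀ t, z k t ≠ z j t)
    (hsol : IsDiskSolution R m z)
    (hsol' : IsDiskSolution R m (fun k t => Complex.exp (Complex.I * (t : ℂ)) * z k t)) :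
    (∀ k t, 2 * Complex.I * deriv (z k) t = z k t) ∧
      (∀ k (t t' : ℝ), ‖z k t‖ = ‖z k t'‖) := by
  have hEabs : ∀ s : ℝ, ‖Complex.exp (Complex.I * s)‖ = 1 := by
    intro s; simp [Complex.norm_exp]
  have key : ∀ k t, 2 * Complex.I * deriv (z k) t = z k t := by
    intro k t
    have hEE : Complex.exp (Complex.I * (t : ℂ)) * conj (Complex.exp (Complex.I * (t : ℂ))) = 1 := by
      rw [Complex.mul_conj]; norm_cast
      simp [Complex.normSq_eq_norm_sq, hEabs]
    have hzz : conj (z k t) * z k t = (((‖z k t‖) ^ 2 : ℝ) : ℂ) := by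
      rw [mul_comm, Complex.mul_conj]; norm_cast
      exact Complex.normSq_eq_norm_sq _
    -- first derivative of rotated curves
    have hw1 : ∀ (j : Fin n) (s : ℝ),
        HasDerivAt (fun y : ℝ => Complex.exp (Complex.I * (y : ℂ)) * z j y)
          (Complex.I * Complex.exp (Complex.I * (s : ℂ)) * z j s
            + Complex.exp (Complex.I * (s : ℂ)) * deriv (z j) s) s :=
      fun j s => (cexp_mul_hasDerivAt Complex.I s).mul ((hz1 j s).hasDerivAt)
    have hdw : deriv (fun y : ℝ => Complex.exp (Complex.I * (y : ℂ)) * z k y)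
        = fun s : ℝ => Complex.I * Complex.exp (Complex.I * (s : ℂ)) * z k s
            + Complex.exp (Complex.I * (s : ℂ)) * deriv (z k) s :=
      funext fun s => (hw1 k s).deriv
    have hw2 : HasDerivAt (fun s : ℝ => Complex.I * Complex.exp (Complex.I * (s : ℂ)) * z k s
            + Complex.exp (Complex.I * (s : ℂ)) * deriv (z k) s)
        ((Complex.I * (Complex.I * Complex.exp (Complex.I * (t : ℂ))) * z k t
            + Complex.I * Complex.exp (Complex.I * (t : ℂ)) * deriv (z k) t)
          + (Complex.I * Complex.exp (Complex.I * (t : ℂ)) * deriv (z k) t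
            + Complex.exp (Complex.I * (t : ℂ)) * deriv (deriv (z k)) t)) t := by
      have h1 : HasDerivAt (fun s : ℝ => Complex.I * Complex.exp (Complex.I * (s : ℂ)) * z k s)
          (Complex.I * (Complex.I * Complex.exp (Complex.I * (t : ℂ))) * z k t
            + Complex.I * Complex.exp (Complex.I * (t : ℂ)) * deriv (z k) t) t := by
        have := ((cexp_mul_hasDerivAt Complex.I t).const_mul Complex.I).mul ((hz1 k t).hasDerivAt)
        exact this
      have h2 : HasDerivAt (fun s : ℝ => Complex.exp (Complex.I * (s : ℂ)) * deriv (z k) s)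
          (Complex.I * Complex.exp (Complex.I * (t : ℂ)) * deriv (z k) t
            + Complex.exp (Complex.I * (t : ℂ)) * deriv (deriv (z k)) t) t :=
        (cexp_mul_hasDerivAt Complex.I t).mul ((hz2 k t).hasDerivAt)
      exact h1.add h2
    have hddw : deriv (deriv (fun y : ℝ => Complex.exp (Complex.I * (y : ℂ)) * z k y)) t
        = (Complex.I * (Complex.I * Complex.exp (Complex.I * (t : ℂ))) * z k t
            + Complex.I * Complex.exp (Complex.I * (t : ℂ)) * deriv (z k) t)
          + (Complex.I * Complex.exp (Complex.I * (t : ℂ)) * deriv (z k) t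
            + Complex.exp (Complex.I * (t : ℂ)) * deriv (deriv (z k)) t) := by
      rw [hdw]; exact hw2.deriv
    have habs : ∀ (j : Fin n) (s : ℝ),
        ‖Complex.exp (Complex.I * (s : ℂ)) * z j s‖ = ‖z j s‖ := by
      intro j s; simp [map_mul, hEabs]
    -- sum identity
    have hsum : (∑ j ∈ Finset.univ.erase k,
            (m j : ℂ) * (R : ℂ)
              * ((R : ℂ) ^ 2 - (((‖z k t‖) ^ 2 : ℝ) : ℂ))
              * ((((R ^ 2 - (‖z j t‖) ^ 2) ^ 2 : ℝ)) : ℂ)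
              * (Complex.exp (Complex.I * (t : ℂ)) * z j t
                  - Complex.exp (Complex.I * (t : ℂ)) * z k t)
              * ((R : ℂ) ^ 2 - (Complex.exp (Complex.I * (t : ℂ)) * z k t)
                  * conj (Complex.exp (Complex.I * (t : ℂ)) * z j t))
              / (((diskTheta R (z k t) (z j t)) ^ ((3 : ℝ) / 2) : ℝ) : ℂ))
        = Complex.exp (Complex.I * (t : ℂ)) * ∑ j ∈ Finset.univ.erase k,
            (m j : ℂ) * (R : ℂ) * ((R : ℂ) ^ 2 - (((‖z k t‖) ^ 2 : ℝ) : ℂ))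
              * ((((R ^ 2 - (‖z j t‖) ^ 2) ^ 2 : ℝ)) : ℂ)
              * (z j t - z k t) * ((R : ℂ) ^ 2 - z k t * conj (z j t))
              / (((diskTheta R (z k t) (z j t)) ^ ((3 : ℝ) / 2) : ℝ) : ℂ) := by
      rw [Finset.mul_sum]
      refine Finset.sum_congr rfl fun j hj => ?_
      rw [map_mul]
      linear_combination
        (-((m j : ℂ) * (R : ℂ) * ((R : ℂ) ^ 2 - (((‖z k t‖) ^ 2 : ℝ) : ℂ))
          * ((((R ^ 2 - (‖z j t‖) ^ 2) ^ 2 : ℝ)) : ℂ)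
          * (Complex.exp (Complex.I * (t : ℂ)) * (z j t - z k t)) * (z k t * conj (z j t))
          / (((diskTheta R (z k t) (z j t)) ^ ((3 : ℝ) / 2) : ℝ) : ℂ))) * hEE
    have eq2 := hsol' k t
    rw [hddw] at eq2
    simp only [hdw] at eq2
    simp only [habs] at eq2
    simp only [diskTheta_rot R _ _ _ (hEabs t)] at eq2
    rw [hsum] at eq2
    rw [map_mul] at eq2
    have eq1 := hsol k t
    -- algebra
    have hDne : ((R : ℂ) ^ 2 - (((‖z k t‖) ^ 2 : ℝ) : ℂ)) ≠ 0 := by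
      have h0 : (0 : ℝ) < R ^ 2 - (‖z k t‖) ^ 2 := by
        have := hdisk k t
        nlinarith [norm_nonneg (z k t)]
      have : ((R ^ 2 - (‖z k t‖) ^ 2 : ℝ) : ℂ) ≠ 0 := by
        exact_mod_cast h0.ne'
      push_cast at this ⊢
      convert this using 2 <;> push_cast <;> ring
    set a := Complex.exp (Complex.I * (t : ℂ)) with ha
    set p := z k t
    set q := deriv (z k) t
    set c := (((‖z k t‖) ^ 2 : ℝ) : ℂ)
    have e5 : a * (2 * Complex.I * q - p)
        * (1 + 2 * c * ((R : ℂ) ^ 2 - c)⁻¹) = 0 := by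
      linear_combination eq2 - a * eq1
        + (-a * p) * Complex.I_sq
        + (-2 * a * conj p * (Complex.I * p + q) ^ 2 * ((R : ℂ) ^ 2 - c)⁻¹) * hEE
        + (-2 * a * c * p * ((R : ℂ) ^ 2 - c)⁻¹) * Complex.I_sq
        + (-2 * a * (Complex.I ^ 2 * p + 2 * Complex.I * q) * ((R : ℂ) ^ 2 - c)⁻¹) * hzz
    have hane : a ≠ 0 := Complex.exp_ne_zero _
    have hfac : (1 + 2 * c * ((R : ℂ) ^ 2 - c)⁻¹) ≠ 0 := by
      have hc2 : ((R : ℂ) ^ 2 + c) ≠ 0 := by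
        have h0 : (0 : ℝ) < R ^ 2 + (‖z k t‖) ^ 2 := by positivity
        have h1 : ((R ^ 2 + (‖z k t‖) ^ 2 : ℝ) : ℂ) ≠ 0 := by
          exact_mod_cast h0.ne'
        have h2 : ((R : ℂ) ^ 2 + c) = ((R ^ 2 + (‖z k t‖) ^ 2 : ℝ) : ℂ) := by
          simp only [c]; push_cast; ring
        rw [h2]; exact h1
      have heq : (1 + 2 * c * ((R : ℂ) ^ 2 - c)⁻¹)
          = ((R : ℂ) ^ 2 + c) / ((R : ℂ) ^ 2 - c) := by
        field_simp
        ring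
      rw [heq]
      exact div_ne_zero hc2 hDne
    have := mul_eq_zero.mp e5
    rcases this with h | h
    · rcases mul_eq_zero.mp h with h' | h'
      · exact absurd h' hane
      · linear_combination h'
    · exact absurd h hfac
  refine ⟨key, ?_⟩
  intro k t t'
  have hg1 : ∀ s : ℝ, HasDerivAt (fun y : ℝ => Complex.exp ((Complex.I / 2) * (y : ℂ)) * z k y)
      ((Complex.I / 2) * Complex.exp ((Complex.I / 2) * (s : ℂ)) * z k s
        + Complex.exp ((Complex.I / 2) * (s : ℂ)) * deriv (z k) s) s :=
    fun s => (cexp_mul_hasDerivAt (Complex.I / 2) s).mul ((hz1 k s).hasDerivAt)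
  have hgd : ∀ s : ℝ, deriv (fun y : ℝ => Complex.exp ((Complex.I / 2) * (y : ℂ)) * z k y) s = 0 := by
    intro s
    rw [(hg1 s).deriv]
    have hk := key k s
    linear_combination (-(Complex.exp ((Complex.I / 2) * (s : ℂ)) * Complex.I / 2)) * hk
      + (Complex.exp ((Complex.I / 2) * (s : ℂ)) * deriv (z k) s) * Complex.I_sq
  have hgdiff : Differentiable ℝ (fun y : ℝ => Complex.exp ((Complex.I / 2) * (y : ℂ)) * z k y) :=
    fun s => (hg1 s).differentiableAt
  have hconst := is_const_of_deriv_eq_zero hgdiff hgd t t'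
  have habs2 : ∀ s : ℝ, ‖Complex.exp ((Complex.I / 2) * (s : ℂ)) * z k s‖
      = ‖z k s‖ := by
    intro s
    simp [map_mul, Complex.norm_exp]
  calc ‖z k t‖ = ‖Complex.exp ((Complex.I / 2) * (t : ℂ)) * z k t‖ :=
        (habs2 t).symm
    _ = ‖Complex.exp ((Complex.I / 2) * (t' : ℂ)) * z k t'‖ := by rw [hconst]
    _ = ‖z k t'‖ := habs2 t'
end

section
/- Let R > 0, m_1, m_2 > 0 and α ∈ (0, R), and define f : (−R, R) → ℝ by f(x) = m_1 α (R² + α²)(R² − x²)² − m_2 x (R² + x²)(R² − α²)². Then f has no double roots: there is no x ∈ (−R, R) with f(x) = 0 and f′(x) = 0. -/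
/-- The function `f(x) = m₁ α (R² + α²)(R² − x²)² − m₂ x (R² + x²)(R² − α²)²`,
whose zeroes give the elliptic relative equilibria of the curved 2-body problem
in the Poincaré disk, has no double roots in `(−R, R)`. -/
theorem no_double_roots (R m₁ m₂ α : ℝ) (hR : 0 < R) (hm₁ : 0 < m₁) (hm₂ : 0 < m₂)
    (hα : α ∈ Set.Ioo 0 R) :
    ¬ ∃ x ∈ Set.Ioo (-R) R,
        (fun x : ℝ => m₁ * α * (R ^ 2 + α ^ 2) * (R ^ 2 - x ^ 2) ^ 2
            - m₂ * x * (R ^ 2 + x ^ 2) * (R ^ 2 - α ^ 2) ^ 2) x = 0 ∧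
        deriv (fun x : ℝ => m₁ * α * (R ^ 2 + α ^ 2) * (R ^ 2 - x ^ 2) ^ 2
            - m₂ * x * (R ^ 2 + x ^ 2) * (R ^ 2 - α ^ 2) ^ 2) x = 0 := by
  obtain ⟨hα0, hαR⟩ := hα
  rintro ⟨x, ⟨hx1, hx2⟩, hf, hf'⟩
  simp only at hf
  have hd : HasDerivAt (fun x : ℝ => m₁ * α * (R ^ 2 + α ^ 2) * (R ^ 2 - x ^ 2) ^ 2
            - m₂ * x * (R ^ 2 + x ^ 2) * (R ^ 2 - α ^ 2) ^ 2)
      ((m₁ * α * (R ^ 2 + α ^ 2)) * (↑2 * (R ^ 2 - x ^ 2) ^ (2 - 1) * (-(↑2 * x ^ (2 - 1))))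
        - ((m₂ * 1) * (R ^ 2 + x ^ 2) + (m₂ * x) * (↑2 * x ^ (2 - 1))) * (R ^ 2 - α ^ 2) ^ 2) x := by
    simpa [Pi.sub_def] using ((((hasDerivAt_pow 2 x).const_sub (R ^ 2)).pow 2).const_mul
        (m₁ * α * (R ^ 2 + α ^ 2))).sub
      ((((hasDerivAt_id x).const_mul m₂).mul
        ((hasDerivAt_pow 2 x).const_add (R ^ 2))).mul_const ((R ^ 2 - α ^ 2) ^ 2))
  rw [hd.deriv] at hf'
  have hRx : 0 < R ^ 2 - x ^ 2 := by nlinarith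
  have hRα : 0 < R ^ 2 - α ^ 2 := by nlinarith
  have hA : 0 < m₁ * α * (R ^ 2 + α ^ 2) := by positivity
  have hx0 : 0 < x := by
    by_contra hx
    push_neg at hx
    nlinarith [mul_pos hA (pow_pos hRx 2),
      mul_nonneg (mul_nonneg (mul_nonneg hm₂.le (neg_nonneg.mpr hx))
        (by positivity : (0:ℝ) ≤ R ^ 2 + x ^ 2)) (sq_nonneg (R ^ 2 - α ^ 2))]
  norm_num at hf'
  nlinarith [mul_pos (mul_pos hA hx0) hRx,
    mul_pos (mul_pos hm₂ (by positivity : (0:ℝ) < R ^ 2 + x ^ 2)) (pow_pos hRα 2),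
    mul_pos (mul_pos (mul_pos hm₂ hx0) hx0) (pow_pos hRα 2)]
end

section
/- Let R > 0, m_1, m_2 > 0 and α ∈ (0, R). Then there exists a unique r ∈ (0, R) such that m_1 α (R² + α²)(R² − r²)² = m_2 r (R² + r²)(R² − α²)². -/
/-- For any `R > 0`, masses `m₁, m₂ > 0` and radius `α ∈ (0, R)`, there exists a
unique `r ∈ (0, R)` with `m₁ α (R² + α²)(R² − r²)² = m₂ r (R² + r²)(R² − α²)²`. -/
theorem exists_unique_radius (R m₁ m₂ α : ℝ) (hR : 0 < R) (hm₁ : 0 < m₁) (hm₂ : 0 < m₂)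
    (hα : α ∈ Set.Ioo 0 R) :
    ∃! r : ℝ, r ∈ Set.Ioo 0 R ∧
      m₁ * α * (R ^ 2 + α ^ 2) * (R ^ 2 - r ^ 2) ^ 2
        = m₂ * r * (R ^ 2 + r ^ 2) * (R ^ 2 - α ^ 2) ^ 2 := by
  obtain ⟨hα0, hαR⟩ := hα
  have hC : 0 < (R ^ 2 - α ^ 2) ^ 2 := by
    have : 0 < R ^ 2 - α ^ 2 := by nlinarith
    positivity
  have hB : 0 < m₁ * α * (R ^ 2 + α ^ 2) := by positivity
  set f : ℝ → ℝ := fun r => m₂ * r * (R ^ 2 + r ^ 2) * (R ^ 2 - α ^ 2) ^ 2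
    - m₁ * α * (R ^ 2 + α ^ 2) * (R ^ 2 - r ^ 2) ^ 2 with hf
  have hcont : ContinuousOn f (Set.Icc 0 R) := by
    apply Continuous.continuousOn
    fun_prop
  have hmono : StrictMonoOn f (Set.Icc 0 R) := by
    intro x hx y hy hxy
    have hx0 : 0 ≤ x := hx.1
    have hyR : y ≤ R := hy.2
    have hy0 : 0 ≤ y := le_trans hx0 hxy.le
    have h1 : m₂ * x * (R ^ 2 + x ^ 2) * (R ^ 2 - α ^ 2) ^ 2
        < m₂ * y * (R ^ 2 + y ^ 2) * (R ^ 2 - α ^ 2) ^ 2 := by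
      apply mul_lt_mul_of_pos_right _ hC
      have : x * (R ^ 2 + x ^ 2) < y * (R ^ 2 + y ^ 2) := by
        have h3 := mul_nonneg (sub_nonneg.mpr hxy.le)
          (add_nonneg (add_nonneg (sq_nonneg x) (mul_nonneg hx0 hy0)) (sq_nonneg y))
        nlinarith [mul_pos (sub_pos.mpr hxy) (pow_pos hR 2)]
      calc m₂ * x * (R ^ 2 + x ^ 2) = m₂ * (x * (R ^ 2 + x ^ 2)) := by ring
        _ < m₂ * (y * (R ^ 2 + y ^ 2)) := by exact mul_lt_mul_of_pos_left this hm₂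
        _ = m₂ * y * (R ^ 2 + y ^ 2) := by ring
    have hyRsq : y ^ 2 ≤ R ^ 2 := by nlinarith
    have hxy2 : x ^ 2 ≤ y ^ 2 := by nlinarith
    have h2 : (R ^ 2 - y ^ 2) ^ 2 ≤ (R ^ 2 - x ^ 2) ^ 2 := by
      apply pow_le_pow_left₀ (by linarith) (by linarith)
    have h2' : m₁ * α * (R ^ 2 + α ^ 2) * (R ^ 2 - y ^ 2) ^ 2
        ≤ m₁ * α * (R ^ 2 + α ^ 2) * (R ^ 2 - x ^ 2) ^ 2 :=
      mul_le_mul_of_nonneg_left h2 hB.le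
    simp only [hf]
    linarith
  have hf0 : f 0 < 0 := by
    simp only [hf]
    nlinarith [pow_pos (pow_pos hR 2) 2]
  have hfR : 0 < f R := by
    simp only [hf]
    have : (R ^ 2 - R ^ 2) ^ 2 = 0 := by ring
    nlinarith [mul_pos (mul_pos (mul_pos hm₂ hR) (by positivity : (0:ℝ) < R ^ 2 + R ^ 2)) hC]
  have hsub : Set.Ioo (f 0) (f R) ⊆ f '' Set.Ioo 0 R := intermediate_value_Ioo hR.le hcont
  obtain ⟨r, hr, hfr⟩ := hsub ⟨hf0, hfR⟩
  refine ⟨r, ⟨hr, by simp only [hf] at hfr; linarith⟩, ?_⟩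
  rintro s ⟨hs, hseq⟩
  have hfs : f s = 0 := by simp only [hf]; linarith
  have : f s = f r := by rw [hfs, hfr]
  exact hmono.injOn (Set.Ioo_subset_Icc_self hs) (Set.Ioo_subset_Icc_self hr) this
end

section
/- Let R > 0, m_1, m_2 > 0, α ∈ (0, R), and let r ∈ (0, R) satisfy m_1 α (R² + α²)(R² − r²)² = m_2 r (R² + r²)(R² − α²)². Then: (1) if m_2 > m_1 then r < α; (2) if m_1 = m_2 then r = α; (3) if m_1 > m_2 then r > α. -/
lemma key_mono (R x y : ℝ) (hR : 0 < R) (hx : 0 < x) (hxy : x < y) (hy : y < R) :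
    x * (R ^ 2 + x ^ 2) * (R ^ 2 - y ^ 2) ^ 2 < y * (R ^ 2 + y ^ 2) * (R ^ 2 - x ^ 2) ^ 2 := by
  have hy0 : 0 < y := hx.trans hxy
  have h1 : 0 < R ^ 2 - x * y := by nlinarith
  have h2 : 0 < R ^ 4 + R ^ 2 * (x * y) + x ^ 2 * y ^ 2 + R ^ 2 * (x ^ 2 + 3 * x * y + y ^ 2) := by
    positivity
  have h3 := mul_pos (mul_pos (sub_pos.2 hxy) h1) h2
  nlinarith [h3]

/-- Comparison of the radii of the two bodies in an elliptic relative equilibrium of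
the curved 2-body problem in the Poincaré disk, according to the relative sizes of
the masses. -/
theorem radius_mass_comparison (R m₁ m₂ α r : ℝ) (hR : 0 < R) (hm₁ : 0 < m₁) (hm₂ : 0 < m₂)
    (hα : α ∈ Set.Ioo 0 R) (hr : r ∈ Set.Ioo 0 R)
    (heq : m₁ * α * (R ^ 2 + α ^ 2) * (R ^ 2 - r ^ 2) ^ 2
      = m₂ * r * (R ^ 2 + r ^ 2) * (R ^ 2 - α ^ 2) ^ 2) :
    (m₁ < m₂ → r < α) ∧ (m₁ = m₂ → r = α) ∧ (m₂ < m₁ → α < r) := by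
  obtain ⟨hα0, hαR⟩ := hα
  obtain ⟨hr0, hrR⟩ := hr
  have hL : 0 < α * (R ^ 2 + α ^ 2) * (R ^ 2 - r ^ 2) ^ 2 := by
    have : R ^ 2 - r ^ 2 > 0 := by nlinarith
    positivity
  have hRt : 0 < r * (R ^ 2 + r ^ 2) * (R ^ 2 - α ^ 2) ^ 2 := by
    have : R ^ 2 - α ^ 2 > 0 := by nlinarith
    positivity
  refine ⟨?_, ?_, ?_⟩
  · intro h
    by_contra hle
    push_neg at hle
    rcases eq_or_lt_of_le hle with h1 | h1
    · subst h1; nlinarith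
    · have := key_mono R α r hR hα0 h1 hrR
      nlinarith
  · intro h
    subst h
    rcases lt_trichotomy r α with h1 | h1 | h1
    · have := key_mono R r α hR hr0 h1 hαR
      nlinarith
    · exact h1
    · have := key_mono R α r hR hα0 h1 hrR
      nlinarith
  · intro h
    by_contra hle
    push_neg at hle
    rcases eq_or_lt_of_le hle with h1 | h1
    · subst h1; nlinarith
    · have := key_mono R r α hR hr0 h1 hαR
      nlinarith
end

section
/- Let R > 0 and r ∈ (0, R). For all u, v ∈ (0, 1], the equation u²(1 − v)[(r² − R²)² + R² r² u]³ = v²(1 − u)[(r² − R²)² + R² r² v]³ holds only if u = v. -/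
lemma uv_aux (A B u v : ℝ) (hA : 0 < A) (hB : 0 < B) (hu : 0 < u)
    (huv : u < v) (hv1 : v ≤ 1) :
    u ^ 2 * (1 - v) * (A + B * u) ^ 3 < v ^ 2 * (1 - u) * (A + B * v) ^ 3 := by
  have hv : 0 < v := hu.trans huv
  have hh : u ^ 2 * (A + B * u) ^ 3 < v ^ 2 * (A + B * v) ^ 3 := by
    apply mul_lt_mul'' <;> [skip; skip; positivity; positivity]
    · exact pow_lt_pow_left₀ huv hu.le (by norm_num)
    · exact pow_lt_pow_left₀ (by nlinarith) (by positivity) (by norm_num)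
  rcases eq_or_lt_of_le hv1 with h1 | h1
  · have : u ^ 2 * (1 - v) * (A + B * u) ^ 3 = 0 := by rw [← h1]; ring
    rw [this]
    have : 0 < 1 - u := by linarith
    positivity
  · have h2 : 0 < 1 - v := by linarith
    calc u ^ 2 * (1 - v) * (A + B * u) ^ 3
        = (1 - v) * (u ^ 2 * (A + B * u) ^ 3) := by ring
      _ < (1 - v) * (v ^ 2 * (A + B * v) ^ 3) := by
          exact mul_lt_mul_of_pos_left hh h2
      _ ≤ (1 - u) * (v ^ 2 * (A + B * v) ^ 3) := by
          apply mul_le_mul_of_nonneg_right (by linarith) (by positivity)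
      _ = v ^ 2 * (1 - u) * (A + B * v) ^ 3 := by ring

/-- For `0 < r < R` and `u, v ∈ (0, 1]`, the equation
`u²(1 − v)[(r² − R²)² + R²r²u]³ = v²(1 − u)[(r² − R²)² + R²r²v]³` holds only when
`u = v`. -/
theorem uv_symmetric_equation (R r : ℝ) (hr : 0 < r) (hrR : r < R) :
    ∀ u v : ℝ, u ∈ Set.Ioc 0 1 → v ∈ Set.Ioc 0 1 →
      u ^ 2 * (1 - v) * ((r ^ 2 - R ^ 2) ^ 2 + R ^ 2 * r ^ 2 * u) ^ 3
        = v ^ 2 * (1 - u) * ((r ^ 2 - R ^ 2) ^ 2 + R ^ 2 * r ^ 2 * v) ^ 3 →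
      u = v := by
  intro u v hu hv heq
  have hR : 0 < R := hr.trans hrR
  have hA : 0 < (r ^ 2 - R ^ 2) ^ 2 := by
    have h : r ^ 2 - R ^ 2 ≠ 0 := by nlinarith
    positivity
  have hB : 0 < R ^ 2 * r ^ 2 := by positivity
  rcases lt_trichotomy u v with h | h | h
  · exact absurd heq (ne_of_lt (uv_aux _ _ _ _ hA hB hu.1 h hv.2))
  · exact h
  · exact absurd heq.symm (ne_of_lt (uv_aux _ _ _ _ hA hB hv.1 h hu.2))
end

section
/- Let m_1, m_2 > 0 and let w_1, w_2 ∈ ℂ with Im w_1 > 0, Im w_2 > 0, Re w_1 ≠ 0, Re w_2 ≠ 0 and Im(w_2 w_1) ≠ 0. Put y_k = Im w_k and β_k = Im w_k / Re w_k for k = 1, 2. Then the complex equation m_1 β_2 y_2 (|w_1|² − w_2 w_1) = −m_2 β_1 y_1 (|w_2|² − w_2 w_1) holds if and only if m_1 β_2 y_2 = −m_2 β_1 y_1 and |w_1| = |w_2| (in particular β_1 and β_2 then have opposite signs). -/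
open Complex

/-- Condition for two bodies on half lines through the origin of the Poincaré upper
half plane to form a hyperbolic relative equilibrium: the complex equation
`m₁ β₂ y₂ (|w₁|² − w₂w₁) = −m₂ β₁ y₁ (|w₂|² − w₂w₁)` holds iff `m₁ β₂ y₂ = −m₂ β₁ y₁`
and `|w₁| = |w₂|`. -/
theorem hyperbolic_slope_condition (m₁ m₂ : ℝ) (hm₁ : 0 < m₁) (hm₂ : 0 < m₂)
    (w₁ w₂ : ℂ) (h₁ : 0 < w₁.im) (h₂ : 0 < w₂.im)
    (hre₁ : w₁.re ≠ 0) (hre₂ : w₂.re ≠ 0) (him : (w₂ * w₁).im ≠ 0) :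
    ((m₁ : ℂ) * ((w₂.im / w₂.re : ℝ) : ℂ) * ((w₂.im : ℝ) : ℂ)
        * (((‖w₁‖ ^ 2 : ℝ) : ℂ) - w₂ * w₁)
      = -(m₂ : ℂ) * ((w₁.im / w₁.re : ℝ) : ℂ) * ((w₁.im : ℝ) : ℂ)
        * (((‖w₂‖ ^ 2 : ℝ) : ℂ) - w₂ * w₁)) ↔
    (m₁ * (w₂.im / w₂.re) * w₂.im = -(m₂ * (w₁.im / w₁.re) * w₁.im) ∧
      ‖w₁‖ = ‖w₂‖) := by
  set p : ℂ := w₂ * w₁ with hp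
  set a : ℝ := m₁ * (w₂.im / w₂.re) * w₂.im with ha
  set b : ℝ := m₂ * (w₁.im / w₁.re) * w₁.im with hb
  have ha0 : a ≠ 0 :=
    mul_ne_zero (mul_ne_zero hm₁.ne' (div_ne_zero h₂.ne' hre₂)) h₂.ne'
  have hrewrite :
      ((m₁ : ℂ) * ((w₂.im / w₂.re : ℝ) : ℂ) * ((w₂.im : ℝ) : ℂ) = (a : ℂ)) := by
    push_cast [ha]; ring
  have hrewrite' :
      (-(m₂ : ℂ) * ((w₁.im / w₁.re : ℝ) : ℂ) * ((w₁.im : ℝ) : ℂ) = ((-b : ℝ) : ℂ)) := by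
    push_cast [hb]; ring
  rw [hrewrite, hrewrite']
  rw [Complex.ext_iff]
  simp only [Complex.mul_re, Complex.mul_im, Complex.sub_re, Complex.sub_im,
    Complex.ofReal_re, Complex.ofReal_im]
  constructor
  · rintro ⟨hre, him'⟩
    have hab : a = -b := by
      have h : (a + b) * p.im = 0 := by linear_combination -him'
      rcases mul_eq_zero.mp h with h | h
      · linarith
      · exact absurd h him
    have habs2 : ‖w₁‖ ^ 2 = ‖w₂‖ ^ 2 := by
      have h : a * (‖w₁‖ ^ 2 - ‖w₂‖ ^ 2) = 0 := by
        linear_combination hre + hab * (p.re - ‖w₂‖ ^ 2)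
      rcases mul_eq_zero.mp h with h | h
      · exact absurd h ha0
      · linarith
    exact ⟨hab, by
      nlinarith [norm_nonneg w₁, norm_nonneg w₂]⟩
  · rintro ⟨hab, habs⟩
    rw [hab, habs]
    constructor <;> ring
end
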